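/- Let (e_k) be a conditional (i.e., not unconditional) spreading Schauder basic sequence in a Banach space, and suppose that the sequence u_k = e_{2k-1} − e_{2k} is equivalent to the unit vector basis of c_0. Then (e_k) is equivalent to the summing basis of c_0. -/

import Mathlib

open Filter Topology

variable {X : Type*} [NormedAddCommGroup X] [NormedSpace ℝ X]

/-- `(e_k)` is a Schauder basic sequence: the vectors are non-zero and the
partial-sum projections are uniformly bounded. -/
def IsBasicSeq (e : ℕ → X) : Prop :=
  (∀ k, e k ≠ 0) ∧ ∃ C : ℝ, 1 ≤ C ∧ ∀ (m n : ℕ), m ≤ n → ∀ a : ℕ → ℝ,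
    ‖∑ i ∈ Finset.range m, a i • e i‖ ≤ C * ‖∑ i ∈ Finset.range n, a i • e i‖

/-- `(e_k)` is an unconditional basic sequence: sign changes of coefficients
are uniformly bounded. -/
def IsUnconditionalSeq (e : ℕ → X) : Prop :=
  ∃ C : ℝ, 1 ≤ C ∧ ∀ (n : ℕ) (a ε : ℕ → ℝ), (∀ i, ε i = 1 ∨ ε i = -1) →
    ‖∑ i ∈ Finset.range n, (ε i * a i) • e i‖ ≤
      C * ‖∑ i ∈ Finset.range n, a i • e i‖

/-- `(e_k)` is spreading: it is uniformly equivalent to all of its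
subsequences. -/
def IsSpreadingSeq (e : ℕ → X) : Prop :=
  ∃ C : ℝ, 1 ≤ C ∧ ∀ (k : ℕ → ℕ), StrictMono k → ∀ (n : ℕ) (a : ℕ → ℝ),
    ‖∑ i ∈ Finset.range n, a i • e (k i)‖ ≤
        C * ‖∑ i ∈ Finset.range n, a i • e i‖ ∧
    ‖∑ i ∈ Finset.range n, a i • e i‖ ≤
        C * ‖∑ i ∈ Finset.range n, a i • e (k i)‖

/-- `(u_k)` is equivalent to the unit vector basis of `c₀`. -/
def EquivC0Basis (u : ℕ → X) : Prop :=
  ∃ C : ℝ, 1 ≤ C ∧ ∀ (n : ℕ) (a : ℕ → ℝ),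
    ‖∑ i ∈ Finset.range n, a i • u i‖ ≤ C * (⨆ i ∈ Finset.range n, |a i|) ∧
    (⨆ i ∈ Finset.range n, |a i|) ≤ C * ‖∑ i ∈ Finset.range n, a i • u i‖

/-- `(e_k)` is equivalent to the summing basis of `c₀`: the norm of
`∑ a_k e_k` is equivalent to `sup_m |∑_{k ≤ m} a_k|`. -/
def EquivSummingBasis (e : ℕ → X) : Prop :=
  ∃ C : ℝ, 1 ≤ C ∧ ∀ (n : ℕ) (a : ℕ → ℝ),
    ‖∑ i ∈ Finset.range n, a i • e i‖ ≤
      C * (⨆ m ∈ Finset.range (n + 1), |∑ i ∈ Finset.range m, a i|) ∧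
    (⨆ m ∈ Finset.range (n + 1), |∑ i ∈ Finset.range m, a i|) ≤
      C * ‖∑ i ∈ Finset.range n, a i • e i‖

/-- A conditional (non-unconditional) spreading Schauder basic sequence whose
differences `u_k = e_{2k-1} - e_{2k}` are equivalent to the unit vector basis
of `c₀` is itself equivalent to the summing basis of `c₀`. -/
private lemma biSup_abs_le (s : Finset ℕ) (f : ℕ → ℝ) (B : ℝ) (hB : 0 ≤ B)
    (h : ∀ i ∈ s, |f i| ≤ B) : (⨆ i ∈ s, |f i|) ≤ B :=
  Real.iSup_le (fun i => Real.iSup_le (fun hi => h i hi) hB) hB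

private lemma sum_range_two_mul {M : Type*} [AddCommMonoid M] (f : ℕ → M) (N : ℕ) :
    ∑ j ∈ Finset.range (2 * N), f j
      = ∑ m ∈ Finset.range N, f (2 * m) + ∑ m ∈ Finset.range N, f (2 * m + 1) := by
  induction N with
  | zero => simp
  | succ n ih =>
    have h : 2 * (n + 1) = 2 * n + 1 + 1 := by ring
    rw [h, Finset.sum_range_succ, Finset.sum_range_succ,
      Finset.sum_range_succ (f := fun m => f (2 * m)),
      Finset.sum_range_succ (f := fun m => f (2 * m + 1)), ih]
    abel


private lemma abs_le_biSup (s : Finset ℕ) (f : ℕ → ℝ) {j : ℕ} (hj : j ∈ s) :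
    |f j| ≤ ⨆ i ∈ s, |f i| := by
  have hM : ∀ i, (⨆ _ : i ∈ s, |f i|) ≤ ∑ i ∈ s, |f i| := fun i =>
    Real.iSup_le (fun hi => Finset.single_le_sum (fun i _ => abs_nonneg (f i)) hi)
      (Finset.sum_nonneg fun i _ => abs_nonneg _)
  have h1 : |f j| ≤ ⨆ _ : j ∈ s, |f j| :=
    le_ciSup (f := fun _ : j ∈ s => |f j|)
      ⟨|f j|, by rintro x ⟨h, rfl⟩; exact le_rfl⟩ hj
  exact h1.trans (le_ciSup (f := fun i => ⨆ _ : i ∈ s, |f i|)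
    ⟨∑ i ∈ s, |f i|, by rintro x ⟨i, rfl⟩; exact hM i⟩ j)

private lemma sum_range_add' {M : Type*} [AddCommMonoid M] (f : ℕ → M) (a b : ℕ) :
    ∑ j ∈ Finset.range (a + b), f j
      = ∑ j ∈ Finset.range a, f j + ∑ i ∈ Finset.range b, f (a + i) := by
  induction b with
  | zero => simp
  | succ n ih =>
    have h : a + (n + 1) = (a + n) + 1 := by ring
    rw [h, Finset.sum_range_succ, ih, Finset.sum_range_succ (f := fun i => f (a + i))]
    abel

private lemma sum_range_block {M : Type*} [AddCommMonoid M] (f : ℕ → M) (N n : ℕ) :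
    ∑ j ∈ Finset.range (N * n), f j
      = ∑ k ∈ Finset.range N, ∑ i ∈ Finset.range n, f (k * n + i) := by
  induction N with
  | zero => simp
  | succ m ih =>
    have h : (m + 1) * n = m * n + n := by ring
    rw [h, sum_range_add', ih, Finset.sum_range_succ]

private lemma abel_summation (f : ℕ → X) (a : ℕ → ℝ) (n : ℕ) :
    ∑ i ∈ Finset.range n, a i • f i
      = (∑ m ∈ Finset.range n, (∑ i ∈ Finset.range (m + 1), a i) • (f m - f (m + 1)))
        + (∑ i ∈ Finset.range n, a i) • f n := by
  induction n with
  | zero => simp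
  | succ n ih =>
    rw [Finset.sum_range_succ, ih,
      Finset.sum_range_succ (f := fun m => (∑ i ∈ Finset.range (m + 1), a i) • (f m - f (m + 1))),
      Finset.sum_range_succ (f := a)]
    module

private lemma pairs_bound (e : ℕ → X) (hspread : IsSpreadingSeq e)
    (hu : EquivC0Basis fun k => e (2 * k) - e (2 * k + 1)) :
    ∃ C₁ : ℝ, 1 ≤ C₁ ∧ ∀ (p q : ℕ → ℕ), (∀ m, p m < q m) → (∀ m, q m < p (m + 1)) →
      ∀ (N : ℕ) (b : ℕ → ℝ) (B : ℝ), 0 ≤ B → (∀ m, m < N → |b m| ≤ B) →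
      ‖∑ m ∈ Finset.range N, b m • (e (p m) - e (q m))‖ ≤ C₁ * B := by
  obtain ⟨C, hC, hsp⟩ := hspread
  obtain ⟨C0, hC0, hc0⟩ := hu
  refine ⟨C * C0, by nlinarith, ?_⟩
  intro p q hpq hqp N b B hB hbB
  set a : ℕ → ℝ := fun i => if i % 2 = 0 then b (i / 2) else -(b (i / 2)) with ha
  set k : ℕ → ℕ := fun i => if i % 2 = 0 then p (i / 2) else q (i / 2) with hk
  have hkmono : StrictMono k := by
    apply strictMono_nat_of_lt_succ
    intro i
    rcases Nat.even_or_odd i with hi | hi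
    · obtain ⟨m, rfl⟩ := hi
      have h1 : (m + m) % 2 = 0 := by omega
      have h2 : (m + m) / 2 = m := by omega
      have h3 : (m + m + 1) % 2 = 1 := by omega
      have h4 : (m + m + 1) / 2 = m := by omega
      have := hpq m
      simp only [hk, h1, h2, h3, h4]
      norm_num
      exact this
    · obtain ⟨m, rfl⟩ := hi
      have h1 : (2 * m + 1) % 2 = 1 := by omega
      have h2 : (2 * m + 1) / 2 = m := by omega
      have h3 : (2 * m + 1 + 1) % 2 = 0 := by omega
      have h4 : (2 * m + 1 + 1) / 2 = m + 1 := by omega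
      have := hqp m
      simp only [hk, h1, h2, h3, h4]
      norm_num
      exact this
  have keyed : ∀ (g : ℕ → ℕ), ∑ i ∈ Finset.range (2 * N), a i • e (g i)
      = ∑ m ∈ Finset.range N, (b m • e (g (2 * m)) - b m • e (g (2 * m + 1))) := by
    intro g
    rw [sum_range_two_mul (fun i => a i • e (g i)) N]
    have hA : ∀ m ∈ Finset.range N, a (2 * m) • e (g (2 * m)) = b m • e (g (2 * m)) := by
      intro m _
      have h1 : (2 * m) % 2 = 0 := by omega
      have h2 : (2 * m) / 2 = m := by omega
      simp [ha, h1, h2]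
    have hB2 : ∀ m ∈ Finset.range N, a (2 * m + 1) • e (g (2 * m + 1))
        = -(b m • e (g (2 * m + 1))) := by
      intro m _
      have h1 : (2 * m + 1) % 2 = 1 := by omega
      have h2 : (2 * m + 1) / 2 = m := by omega
      simp [ha, h1, h2]
    rw [Finset.sum_congr rfl hA, Finset.sum_congr rfl hB2, Finset.sum_sub_distrib,
      Finset.sum_neg_distrib]
    abel
  have hid1 : ∑ i ∈ Finset.range (2 * N), a i • e (k i)
      = ∑ m ∈ Finset.range N, b m • (e (p m) - e (q m)) := by
    rw [keyed k]
    apply Finset.sum_congr rfl; intro m _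
    have h1 : (2 * m) % 2 = 0 := by omega
    have h2 : (2 * m) / 2 = m := by omega
    have h3 : (2 * m + 1) % 2 = 1 := by omega
    have h4 : (2 * m + 1) / 2 = m := by omega
    simp [hk, h1, h2, h3, h4, smul_sub]
  have hid2 : ∑ i ∈ Finset.range (2 * N), a i • e i
      = ∑ m ∈ Finset.range N, b m • (e (2 * m) - e (2 * m + 1)) := by
    have h := keyed id
    simp only [id_eq] at h
    rw [h]
    apply Finset.sum_congr rfl; intro m _
    simp [smul_sub]
  have h5 := (hsp k hkmono (2 * N) a).1
  rw [hid1, hid2] at h5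
  refine h5.trans ?_
  have h6 := (hc0 N b).1
  simp only at h6
  have h7 : (⨆ i ∈ Finset.range N, |b i|) ≤ B :=
    biSup_abs_le _ _ _ hB (fun i hi => hbB i (Finset.mem_range.mp hi))
  have h8 : ‖∑ m ∈ Finset.range N, b m • (e (2 * m) - e (2 * m + 1))‖ ≤ C0 * B := by
    refine h6.trans ?_
    exact mul_le_mul_of_nonneg_left h7 (by linarith)
  calc C * ‖∑ m ∈ Finset.range N, b m • (e (2 * m) - e (2 * m + 1))‖
      ≤ C * (C0 * B) := mul_le_mul_of_nonneg_left h8 (by linarith)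
    _ = C * C0 * B := by ring

private lemma diff_bound (e : ℕ → X) (hspread : IsSpreadingSeq e)
    (hu : EquivC0Basis fun k => e (2 * k) - e (2 * k + 1)) :
    ∃ C₂ : ℝ, 1 ≤ C₂ ∧ ∀ (J : ℕ) (t : ℕ → ℝ) (B : ℝ), 0 ≤ B → (∀ j, j < J → |t j| ≤ B) →
      ‖∑ j ∈ Finset.range J, t j • (e j - e (j + 1))‖ ≤ C₂ * B := by
  obtain ⟨C₁, hC₁, hpair⟩ := pairs_bound e hspread hu
  refine ⟨2 * C₁, by linarith, ?_⟩
  intro J t B hB htB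
  set s : ℕ → ℝ := fun j => if j < J then t j else 0 with hs
  have hsB : ∀ j, |s j| ≤ B := by
    intro j
    by_cases h : j < J
    · simpa [hs, h] using htB j h
    · simp [hs, h, hB]
  have hext : ∑ j ∈ Finset.range J, t j • (e j - e (j + 1))
      = ∑ j ∈ Finset.range (2 * J), s j • (e j - e (j + 1)) := by
    have h1 : ∑ j ∈ Finset.range J, t j • (e j - e (j + 1))
        = ∑ j ∈ Finset.range J, s j • (e j - e (j + 1)) := by
      apply Finset.sum_congr rfl; intro j hj
      have : j < J := Finset.mem_range.mp hj
      simp [hs, this]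
    rw [h1]
    apply Finset.sum_subset (Finset.range_subset_range.mpr (by omega : J ≤ 2 * J))
    intro j _ hj
    have : ¬ j < J := fun h => hj (Finset.mem_range.mpr h)
    simp [hs, this]
  rw [hext, sum_range_two_mul (fun j => s j • (e j - e (j + 1))) J]
  have hev : ‖∑ m ∈ Finset.range J, s (2 * m) • (e (2 * m) - e (2 * m + 1))‖ ≤ C₁ * B := by
    apply hpair (fun m => 2 * m) (fun m => 2 * m + 1)
      (fun m => by show 2 * m < 2 * m + 1; omega)
      (fun m => by show 2 * m + 1 < 2 * (m + 1); omega)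
      J _ B hB (fun m _ => hsB (2 * m))
  have hod : ‖∑ m ∈ Finset.range J, s (2 * m + 1) • (e (2 * m + 1) - e (2 * m + 1 + 1))‖
      ≤ C₁ * B := by
    apply hpair (fun m => 2 * m + 1) (fun m => 2 * m + 2)
      (fun m => by show 2 * m + 1 < 2 * m + 2; omega)
      (fun m => by show 2 * m + 2 < 2 * (m + 1) + 1; omega)
      J _ B hB (fun m _ => hsB (2 * m + 1))
  calc ‖∑ m ∈ Finset.range J, s (2 * m) • (e (2 * m) - e (2 * m + 1))
        + ∑ m ∈ Finset.range J, s (2 * m + 1) • (e (2 * m + 1) - e (2 * m + 1 + 1))‖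
      ≤ ‖∑ m ∈ Finset.range J, s (2 * m) • (e (2 * m) - e (2 * m + 1))‖
        + ‖∑ m ∈ Finset.range J, s (2 * m + 1) • (e (2 * m + 1) - e (2 * m + 1 + 1))‖ :=
        norm_add_le _ _
    _ ≤ C₁ * B + C₁ * B := add_le_add hev hod
    _ = 2 * C₁ * B := by ring

private lemma norm_e_le (e : ℕ → X) (C : ℝ)
    (hsp : ∀ (k : ℕ → ℕ), StrictMono k → ∀ (n : ℕ) (a : ℕ → ℝ),
      ‖∑ i ∈ Finset.range n, a i • e (k i)‖ ≤ C * ‖∑ i ∈ Finset.range n, a i • e i‖ ∧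
      ‖∑ i ∈ Finset.range n, a i • e i‖ ≤ C * ‖∑ i ∈ Finset.range n, a i • e (k i)‖)
    (j : ℕ) : ‖e j‖ ≤ C * ‖e 0‖ ∧ ‖e 0‖ ≤ C * ‖e j‖ := by
  have h := hsp (fun i => i + j) (fun x y hxy => by show x + j < y + j; omega) 1 (fun _ => 1)
  simpa using h

private lemma exists_small_one (e : ℕ → X) (Cb : ℝ) (hCb : 1 ≤ Cb)
    (hb : ∀ (m n : ℕ), m ≤ n → ∀ a : ℕ → ℝ,
      ‖∑ i ∈ Finset.range m, a i • e i‖ ≤ Cb * ‖∑ i ∈ Finset.range n, a i • e i‖)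
    (hP : ¬ ∃ Cs : ℝ, ∀ (n : ℕ) (a : ℕ → ℝ),
      |∑ i ∈ Finset.range n, a i| ≤ Cs * ‖∑ i ∈ Finset.range n, a i • e i‖)
    (δ : ℝ) (hδ : 0 < δ) :
    ∃ (n : ℕ) (a : ℕ → ℝ), 1 ≤ n ∧ (∑ i ∈ Finset.range n, a i = 1) ∧
      (∀ m, m ≤ n → |∑ i ∈ Finset.range m, a i| ≤ 1) ∧
      ‖∑ i ∈ Finset.range n, a i • e i‖ ≤ δ := by
  push_neg at hP
  obtain ⟨n₀, a₀, hgt⟩ := hP (Cb / δ)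
  set F : ℕ → ℝ := fun m => |∑ i ∈ Finset.range m, a₀ i| with hF
  obtain ⟨ms, hmsmem, hmax⟩ := Finset.exists_max_image (Finset.range (n₀ + 1)) F
    ⟨0, by simp⟩
  have hms_le : ms ≤ n₀ := by
    have := Finset.mem_range.mp hmsmem; omega
  have h1 : Cb / δ * ‖∑ i ∈ Finset.range n₀, a₀ i • e i‖ < F ms :=
    lt_of_lt_of_le hgt (hmax n₀ (Finset.mem_range.mpr (by omega)))
  have hCbδ : 0 < Cb / δ := div_pos (by linarith) hδ
  have hFpos : 0 < F ms :=
    lt_of_le_of_lt (mul_nonneg hCbδ.le (norm_nonneg _)) h1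
  set c : ℝ := ∑ i ∈ Finset.range ms, a₀ i with hc
  have hcabs : |c| = F ms := rfl
  have hcne : c ≠ 0 := by
    intro h; rw [h] at hcabs; simp at hcabs; rw [← hcabs] at hFpos; linarith
  refine ⟨ms, fun i => a₀ i / c, ?_, ?_, ?_, ?_⟩
  · rcases Nat.eq_zero_or_pos ms with h | h
    · exfalso; apply hcne; rw [hc, h]; simp
    · omega
  · rw [← Finset.sum_div, ← hc, div_self hcne]
  · intro m hm
    rw [← Finset.sum_div, abs_div]
    rw [div_le_one (by rw [hcabs]; exact hFpos)]
    rw [hcabs]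
    exact hmax m (Finset.mem_range.mpr (by omega))
  · have hre : ∑ i ∈ Finset.range ms, (a₀ i / c) • e i
        = c⁻¹ • ∑ i ∈ Finset.range ms, a₀ i • e i := by
      rw [Finset.smul_sum]
      apply Finset.sum_congr rfl; intro i _
      rw [smul_smul, div_eq_inv_mul]
    rw [hre, norm_smul, Real.norm_eq_abs, abs_inv]
    have h2 : ‖∑ i ∈ Finset.range ms, a₀ i • e i‖
        ≤ Cb * ‖∑ i ∈ Finset.range n₀, a₀ i • e i‖ := hb ms n₀ hms_le a₀
    have h3 : Cb * ‖∑ i ∈ Finset.range n₀, a₀ i • e i‖ ≤ δ * |c| := by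
      rw [hcabs]
      have := mul_lt_mul_of_pos_left h1 hδ
      calc Cb * ‖∑ i ∈ Finset.range n₀, a₀ i • e i‖
          = δ * (Cb / δ * ‖∑ i ∈ Finset.range n₀, a₀ i • e i‖) := by
            field_simp
        _ ≤ δ * F ms := by nlinarith
    have hcpos : 0 < |c| := by rw [hcabs]; exact hFpos
    calc |c|⁻¹ * ‖∑ i ∈ Finset.range ms, a₀ i • e i‖
        ≤ |c|⁻¹ * (δ * |c|) := by
          apply mul_le_mul_of_nonneg_left (h2.trans h3) (inv_nonneg.mpr hcpos.le)
      _ = δ := by field_simp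
private lemma uncond_of_unbounded (e : ℕ → X) (hbasic : IsBasicSeq e) (hspread : IsSpreadingSeq e)
    (hu : EquivC0Basis fun k => e (2 * k) - e (2 * k + 1))
    (hP : ¬ ∃ Cs : ℝ, ∀ (n : ℕ) (a : ℕ → ℝ),
      |∑ i ∈ Finset.range n, a i| ≤ Cs * ‖∑ i ∈ Finset.range n, a i • e i‖) :
    IsUnconditionalSeq e := by
  obtain ⟨hne, Cb, hCb, hb⟩ := hbasic
  obtain ⟨C, hC, hsp⟩ := hspread
  obtain ⟨C₂, hC₂, hdiff⟩ := diff_bound e ⟨C, hC, hsp⟩ hu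
  have he0 : 0 < ‖e 0‖ := norm_pos_iff.mpr (hne 0)
  set c₁ : ℝ := 2 * Cb * C / ‖e 0‖ with hc₁
  have hc₁pos : 0 < c₁ := div_pos (by nlinarith) he0
  -- coefficient bound
  have hcoef : ∀ (N : ℕ) (c : ℕ → ℝ) (k : ℕ), k < N →
      |c k| ≤ c₁ * ‖∑ i ∈ Finset.range N, c i • e i‖ := by
    intro N c k hk
    have hk1 : ‖∑ i ∈ Finset.range (k + 1), c i • e i‖
        ≤ Cb * ‖∑ i ∈ Finset.range N, c i • e i‖ := hb (k + 1) N (by omega) c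
    have hk2 : ‖∑ i ∈ Finset.range k, c i • e i‖
        ≤ Cb * ‖∑ i ∈ Finset.range N, c i • e i‖ := hb k N (by omega) c
    have hsub : c k • e k = (∑ i ∈ Finset.range (k + 1), c i • e i)
        - ∑ i ∈ Finset.range k, c i • e i := by
      rw [Finset.sum_range_succ]; abel
    have h3 : |c k| * ‖e k‖ ≤ 2 * Cb * ‖∑ i ∈ Finset.range N, c i • e i‖ := by
      have := norm_sub_le (∑ i ∈ Finset.range (k + 1), c i • e i)
        (∑ i ∈ Finset.range k, c i • e i)
      rw [← hsub] at this
      rw [← Real.norm_eq_abs, ← norm_smul]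
      linarith
    have h4 : ‖e 0‖ ≤ C * ‖e k‖ := (norm_e_le e C hsp k).2
    have hek : 0 < ‖e k‖ := norm_pos_iff.mpr (hne k)
    rw [hc₁, div_mul_eq_mul_div, le_div_iff₀ he0]
    have hCpos : (0:ℝ) < C := by linarith
    nlinarith [norm_nonneg (∑ i ∈ Finset.range N, c i • e i), abs_nonneg (c k)]
  set Cu : ℝ := max 1 (C * (1 + 2 * C₂) * c₁) with hCu
  refine ⟨Cu, le_max_left _ _, ?_⟩
  intro N c ε hε
  rcases Nat.eq_zero_or_pos N with hN | hN
  · subst hN; simp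
  -- setup
  set S : X := ∑ i ∈ Finset.range N, c i • e i with hS
  set maxc : ℝ := c₁ * ‖S‖ with hmaxc
  have hmaxc0 : 0 ≤ maxc := mul_nonneg hc₁pos.le (norm_nonneg _)
  set δ : ℝ := (N * C + 1)⁻¹ with hδdef
  have hNC : (0:ℝ) ≤ (N:ℝ) * C := mul_nonneg (Nat.cast_nonneg N) (by linarith)
  have hδ : 0 < δ := by rw [hδdef]; positivity
  obtain ⟨n, a, hn1, hsum1, hpart, hsmall⟩ := exists_small_one e Cb hCb hb hP δ hδ
  have hn0 : 0 < n := hn1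
  set B : ℕ → ℝ := fun m => ∑ i ∈ Finset.range m, a i with hB
  set x : ℕ → X := fun k => ∑ i ∈ Finset.range n, a i • e (k * n + i) with hx
  -- x_k is small
  have hxk : ∀ k, ‖x k‖ ≤ C * δ := by
    intro k
    have hmono : StrictMono (fun i => k * n + i) := fun p q hpq => by
      show k * n + p < k * n + q; omega
    have := (hsp (fun i => k * n + i) hmono n a).1
    calc ‖x k‖ ≤ C * ‖∑ i ∈ Finset.range n, a i • e i‖ := this
      _ ≤ C * δ := mul_le_mul_of_nonneg_left hsmall (by linarith)
  -- decomposition of x k - e (k*n) into consecutive differences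
  have ydecomp : ∀ k, x k - e (k * n)
      = ∑ m ∈ Finset.range n, (B (m + 1) - 1) • (e (k * n + m) - e (k * n + m + 1)) := by
    intro k
    have h1 := abel_summation (fun i => e (k * n + i)) a n
    simp only [← Nat.add_assoc] at h1
    rw [hsum1, one_smul] at h1
    have h2 := Finset.sum_range_sub' (fun m => e (k * n + m)) n
    simp only [Nat.add_zero, ← Nat.add_assoc] at h2
    simp only [hx, hB]
    rw [h1]
    simp only [sub_smul, one_smul, Finset.sum_sub_distrib]
    simp only [Finset.sum_sub_distrib] at h2
    rw [h2]
    abel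
  -- global difference representation
  set T : ℕ → ℝ := fun j => ε (j / n) * c (j / n) * (B (j % n + 1) - 1) with hT
  have hTbd : ∀ j, j < N * n → |T j| ≤ 2 * maxc := by
    intro j hj
    have hjn : j / n < N := (Nat.div_lt_iff_lt_mul hn0).mpr hj
    have h1 : |ε (j / n)| = 1 := by rcases hε (j / n) with h | h <;> rw [h] <;> norm_num
    have h2 : |c (j / n)| ≤ maxc := hcoef N c (j / n) hjn
    have h3 : |B (j % n + 1) - 1| ≤ 2 := by
      have hmlt : j % n + 1 ≤ n := by have := Nat.mod_lt j hn0; omega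
      have := hpart (j % n + 1) hmlt
      have hBval : |B (j % n + 1)| ≤ 1 := by rw [hB]; exact this
      calc |B (j % n + 1) - 1| ≤ |B (j % n + 1)| + |(1:ℝ)| := abs_sub _ _
        _ ≤ 2 := by rw [abs_one]; linarith
    have habs : |T j| = |ε (j / n)| * |c (j / n)| * |B (j % n + 1) - 1| := by
      rw [hT]; simp only [abs_mul]
    rw [habs, h1, one_mul]
    calc |c (j / n)| * |B (j % n + 1) - 1| ≤ maxc * 2 :=
        mul_le_mul h2 h3 (abs_nonneg _) hmaxc0
      _ = 2 * maxc := by ring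
  have hglobal : ∑ k ∈ Finset.range N, (ε k * c k) • (x k - e (k * n))
      = ∑ j ∈ Finset.range (N * n), T j • (e j - e (j + 1)) := by
    rw [sum_range_block (fun j => T j • (e j - e (j + 1))) N n]
    apply Finset.sum_congr rfl; intro k hk
    rw [ydecomp k, Finset.smul_sum]
    apply Finset.sum_congr rfl; intro m hm
    have hm' : m < n := Finset.mem_range.mp hm
    have hdiv : (k * n + m) / n = k := by
      rw [show k * n + m = m + n * k by ring, Nat.add_mul_div_left _ _ hn0,
        Nat.div_eq_of_lt hm', Nat.zero_add]
    have hmod : (k * n + m) % n = m := by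
      rw [show k * n + m = m + n * k by ring, Nat.add_mul_mod_self_left,
        Nat.mod_eq_of_lt hm']
    simp only [hT, hdiv, hmod, smul_smul]
  have hTy : ‖∑ k ∈ Finset.range N, (ε k * c k) • (x k - e (k * n))‖
      ≤ C₂ * (2 * maxc) := by
    rw [hglobal]
    exact hdiff (N * n) T (2 * maxc) (by linarith) (fun j hj => hTbd j hj)
  have hδle : (N : ℝ) * C * δ ≤ 1 := by
    rw [hδdef]
    have hne' : (N : ℝ) * C + 1 ≠ 0 := by linarith
    calc (N : ℝ) * C * ((N : ℝ) * C + 1)⁻¹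
        ≤ ((N : ℝ) * C + 1) * ((N : ℝ) * C + 1)⁻¹ := by
          apply mul_le_mul_of_nonneg_right (by linarith) (inv_nonneg.mpr (by linarith))
      _ = 1 := mul_inv_cancel₀ hne'
  have hTx : ‖∑ k ∈ Finset.range N, (ε k * c k) • x k‖ ≤ maxc := by
    calc ‖∑ k ∈ Finset.range N, (ε k * c k) • x k‖
        ≤ ∑ k ∈ Finset.range N, ‖(ε k * c k) • x k‖ := norm_sum_le _ _
      _ ≤ ∑ _k ∈ Finset.range N, maxc * (C * δ) := by
          apply Finset.sum_le_sum; intro k hk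
          rw [norm_smul, Real.norm_eq_abs, abs_mul]
          have h1 : |ε k| = 1 := by rcases hε k with h | h <;> rw [h] <;> norm_num
          rw [h1, one_mul]
          exact mul_le_mul (hcoef N c k (Finset.mem_range.mp hk)) (hxk k)
            (norm_nonneg _) hmaxc0
      _ = N * (maxc * (C * δ)) := by
          rw [Finset.sum_const, Finset.card_range, nsmul_eq_mul]
      _ = maxc * ((N : ℝ) * C * δ) := by ring
      _ ≤ maxc * 1 := mul_le_mul_of_nonneg_left hδle hmaxc0
      _ = maxc := mul_one _
  have hsplit : ∑ k ∈ Finset.range N, (ε k * c k) • e (k * n)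
      = (∑ k ∈ Finset.range N, (ε k * c k) • x k)
        - ∑ k ∈ Finset.range N, (ε k * c k) • (x k - e (k * n)) := by
    rw [← Finset.sum_sub_distrib]
    apply Finset.sum_congr rfl; intro k _
    rw [← smul_sub]
    congr 1
    abel
  have hmono2 : StrictMono (fun k => k * n) := by
    intro p q hpq
    show p * n < q * n
    calc p * n < p * n + n := by omega
      _ = (p + 1) * n := by ring
      _ ≤ q * n := Nat.mul_le_mul_right n (by omega)
  have hsprd := (hsp (fun k => k * n) hmono2 N (fun k => ε k * c k)).2
  calc ‖∑ i ∈ Finset.range N, (ε i * c i) • e i‖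
      ≤ C * ‖∑ k ∈ Finset.range N, (ε k * c k) • e (k * n)‖ := hsprd
    _ ≤ C * (maxc + C₂ * (2 * maxc)) := by
        apply mul_le_mul_of_nonneg_left _ (by linarith)
        rw [hsplit]
        exact (norm_sub_le _ _).trans (add_le_add hTx hTy)
    _ = C * (1 + 2 * C₂) * c₁ * ‖S‖ := by rw [hmaxc]; ring
    _ ≤ Cu * ‖S‖ := mul_le_mul_of_nonneg_right (le_max_right _ _) (norm_nonneg _)

theorem conditional_spreading_with_c0_differences_is_summing
    [CompleteSpace X] (e : ℕ → X)
    (hbasic : IsBasicSeq e) (hspread : IsSpreadingSeq e)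
    (hcond : ¬ IsUnconditionalSeq e)
    (hu : EquivC0Basis fun k => e (2 * k) - e (2 * k + 1)) :
    EquivSummingBasis e := by
  obtain ⟨C₂, hC₂, hdiff⟩ := diff_bound e hspread hu
  obtain ⟨hne, Cb, hCb, hb⟩ := hbasic
  obtain ⟨C, hC, hsp⟩ := hspread
  have he0 : 0 < ‖e 0‖ := norm_pos_iff.mpr (hne 0)
  have hPex : ∃ Cs : ℝ, ∀ (n : ℕ) (a : ℕ → ℝ),
      |∑ i ∈ Finset.range n, a i| ≤ Cs * ‖∑ i ∈ Finset.range n, a i • e i‖ := by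
    by_contra hP
    exact hcond (uncond_of_unbounded e ⟨hne, Cb, hCb, hb⟩ ⟨C, hC, hsp⟩ hu hP)
  obtain ⟨Cs, hCs⟩ := hPex
  have hCs0 : 0 < Cs := by
    have h1 : |∑ i ∈ Finset.range 1, (1:ℝ)| ≤ Cs * ‖∑ i ∈ Finset.range 1, (1:ℝ) • e i‖ :=
      hCs 1 (fun _ => 1)
    simp at h1
    nlinarith [norm_nonneg (e 0)]
  set CF : ℝ := max 1 (max (C₂ + C * ‖e 0‖) (Cs * Cb)) with hCF
  refine ⟨CF, le_max_left _ _, ?_⟩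
  intro n a
  set f : ℕ → ℝ := fun m => ∑ i ∈ Finset.range m, a i with hf
  have h0mem : (0:ℕ) ∈ Finset.range (n + 1) := Finset.mem_range.mpr (by omega)
  have hsup0 : 0 ≤ ⨆ m ∈ Finset.range (n + 1), |f m| :=
    le_trans (abs_nonneg (f 0)) (abs_le_biSup (Finset.range (n + 1)) f h0mem)
  constructor
  · -- upper bound via Abel summation
    have habel := abel_summation e a n
    have hd : ‖∑ m ∈ Finset.range n, f (m + 1) • (e m - e (m + 1))‖
        ≤ C₂ * (⨆ m ∈ Finset.range (n + 1), |f m|) := by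
      apply hdiff n (fun m => f (m + 1)) _ hsup0
      intro j hj
      exact abs_le_biSup (Finset.range (n + 1)) f (Finset.mem_range.mpr (by omega))
    have hen : ‖e n‖ ≤ C * ‖e 0‖ := (norm_e_le e C hsp n).1
    have hfn : |f n| ≤ ⨆ m ∈ Finset.range (n + 1), |f m| :=
      abs_le_biSup (Finset.range (n + 1)) f (Finset.mem_range.mpr (by omega))
    calc ‖∑ i ∈ Finset.range n, a i • e i‖
        = ‖(∑ m ∈ Finset.range n, f (m + 1) • (e m - e (m + 1))) + f n • e n‖ := by
          rw [habel]
      _ ≤ ‖∑ m ∈ Finset.range n, f (m + 1) • (e m - e (m + 1))‖ + ‖f n • e n‖ :=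
          norm_add_le _ _
      _ ≤ C₂ * (⨆ m ∈ Finset.range (n + 1), |f m|)
          + (C * ‖e 0‖) * (⨆ m ∈ Finset.range (n + 1), |f m|) := by
          apply add_le_add hd
          rw [norm_smul, Real.norm_eq_abs]
          have : 0 ≤ |f n| := abs_nonneg _
          have hCe : 0 ≤ C * ‖e 0‖ := by positivity
          calc |f n| * ‖e n‖ ≤ |f n| * (C * ‖e 0‖) :=
              mul_le_mul_of_nonneg_left hen (abs_nonneg _)
            _ ≤ (⨆ m ∈ Finset.range (n + 1), |f m|) * (C * ‖e 0‖) :=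
              mul_le_mul_of_nonneg_right hfn hCe
            _ = (C * ‖e 0‖) * (⨆ m ∈ Finset.range (n + 1), |f m|) := by ring
      _ = (C₂ + C * ‖e 0‖) * (⨆ m ∈ Finset.range (n + 1), |f m|) := by ring
      _ ≤ CF * (⨆ m ∈ Finset.range (n + 1), |f m|) := by
          apply mul_le_mul_of_nonneg_right _ hsup0
          exact le_trans (le_max_left _ _) (le_max_right _ _)
  · -- lower bound via summing functional
    have hbd : ∀ m ∈ Finset.range (n + 1),
        |f m| ≤ (Cs * Cb) * ‖∑ i ∈ Finset.range n, a i • e i‖ := by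
      intro m hm
      have hmn : m ≤ n := by have := Finset.mem_range.mp hm; omega
      calc |f m| ≤ Cs * ‖∑ i ∈ Finset.range m, a i • e i‖ := hCs m a
        _ ≤ Cs * (Cb * ‖∑ i ∈ Finset.range n, a i • e i‖) :=
            mul_le_mul_of_nonneg_left (hb m n hmn a) hCs0.le
        _ = (Cs * Cb) * ‖∑ i ∈ Finset.range n, a i • e i‖ := by ring
    have hnn : 0 ≤ (Cs * Cb) * ‖∑ i ∈ Finset.range n, a i • e i‖ := by
      have : 0 ≤ Cs * Cb := by positivity
      positivity
    calc (⨆ m ∈ Finset.range (n + 1), |f m|)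
        ≤ (Cs * Cb) * ‖∑ i ∈ Finset.range n, a i • e i‖ :=
          biSup_abs_le (Finset.range (n + 1)) f _ hnn hbd
      _ ≤ CF * ‖∑ i ∈ Finset.range n, a i • e i‖ := by
          apply mul_le_mul_of_nonneg_right _ (norm_nonneg _)
          exact le_trans (le_max_right _ _) (le_max_right _ _)
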